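/- Let n ≥ 3 and let W be a weight with w_{i,j} > 0 for all 1 ≤ i < j ≤ n. For any three pairwise distinct permutations π, ψ, φ ∈ S_n, the equality d_{G_n}(π,φ) = d_{G_n}(π,ψ) + d_{G_n}(ψ,φ) holds if and only if d_W(π,φ) = d_W(π,ψ) + d_W(ψ,φ); that is, ψ lies metrically between π and φ with respect to the graph metric d_{G_n} if and only if it does so with respect to d_W. -/

import Mathlib

open Finset

/-- The set of index pairs `(i,j)` with `i < j`. -/
def pairs (n : ℕ) : Finset (Fin n × Fin n) :=
  Finset.univ.filter (fun p => p.1 < p.2)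

/-- The discordance set of two permutations: all pairs `i < j` with
`(π_j - π_i)(φ_j - φ_i) < 0`. -/
def dsc (n : ℕ) (π φ : Equiv.Perm (Fin n)) : Finset (Fin n × Fin n) :=
  (pairs n).filter (fun p =>
    ((π p.2 : ℤ) - (π p.1 : ℤ)) * ((φ p.2 : ℤ) - (φ p.1 : ℤ)) < 0)

/-- `W` is a weight: a strictly upper triangular matrix of nonnegative reals
with positive total sum. -/
def IsWeight (n : ℕ) (W : Fin n → Fin n → ℝ) : Prop :=
  (∀ i j : Fin n, ¬ i < j → W i j = 0) ∧ (∀ i j : Fin n, 0 ≤ W i j) ∧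
    0 < ∑ p ∈ pairs n, W p.1 p.2

/-- The weighted Kendall tau distance. -/
noncomputable def dW (n : ℕ) (W : Fin n → Fin n → ℝ) (π φ : Equiv.Perm (Fin n)) : ℝ :=
  (∑ p ∈ dsc n π φ, W p.1 p.2) / (∑ p ∈ pairs n, W p.1 p.2)
lemma dsc_comm (n : ℕ) (π φ : Equiv.Perm (Fin n)) : dsc n π φ = dsc n φ π := by
  ext p
  simp only [dsc, Finset.mem_filter]
  rw [mul_comm]

/-- The edge graph of the permutohedron of order `n`: two permutations are
adjacent iff their discordance set is a singleton. -/
def Gn (n : ℕ) : SimpleGraph (Equiv.Perm (Fin n)) where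
  Adj π φ := (dsc n π φ).card = 1
  symm := by
    constructor
    intro π φ h
    rwa [dsc_comm]
  loopless := by
    constructor
    intro π h
    have he : dsc n π π = ∅ := by
      ext p
      simp only [dsc, Finset.mem_filter, Finset.notMem_empty, iff_false, not_and]
      intro _
      exact not_lt.mpr (mul_self_nonneg _)
    rw [he] at h
    simp at h

lemma mem_dsc_iff {n : ℕ} {π φ : Equiv.Perm (Fin n)} {p : Fin n × Fin n} :
    p ∈ dsc n π φ ↔ p.1 < p.2 ∧ ¬(π p.1 < π p.2 ↔ φ p.1 < φ p.2) := by
  simp only [dsc, pairs, Finset.mem_filter, Finset.mem_univ, true_and]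
  constructor
  · rintro ⟨hp, hlt⟩
    refine ⟨hp, ?_⟩
    rcases mul_neg_iff.mp hlt with ⟨h1, h2⟩ | ⟨h1, h2⟩ <;>
    · rw [Fin.lt_def, Fin.lt_def]; omega
  · rintro ⟨hp, hne⟩
    refine ⟨hp, ?_⟩
    have hπ : (π p.1 : ℕ) ≠ (π p.2 : ℕ) := by
      intro h; exact absurd (π.injective (Fin.val_injective h)) (ne_of_lt hp)
    have hφ : (φ p.1 : ℕ) ≠ (φ p.2 : ℕ) := by
      intro h; exact absurd (φ.injective (Fin.val_injective h)) (ne_of_lt hp)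
    rw [Fin.lt_def, Fin.lt_def] at hne
    rw [mul_neg_iff]
    rcases lt_or_gt_of_ne hπ with h | h <;> rcases lt_or_gt_of_ne hφ with h' | h'
    · omega
    · left; omega
    · right; omega
    · omega

lemma dsc_symmDiff (n : ℕ) (π ψ φ : Equiv.Perm (Fin n)) :
    dsc n π φ = symmDiff (dsc n π ψ) (dsc n ψ φ) := by
  ext p
  simp only [Finset.mem_symmDiff, mem_dsc_iff]
  tauto

lemma dsc_self (n : ℕ) (π : Equiv.Perm (Fin n)) : dsc n π π = ∅ := by
  ext p; simp [mem_dsc_iff]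

lemma perm_val_eq_card {n : ℕ} (π : Equiv.Perm (Fin n)) (i : Fin n) :
    (π i : ℕ) = (Finset.univ.filter (fun k => π k < π i)).card := by
  have : (Finset.univ.filter (fun k => π k < π i)) = (Finset.Iio (π i)).map π.symm.toEmbedding := by
    ext k
    simp only [Finset.mem_filter, Finset.mem_univ, true_and, Finset.mem_map,
      Finset.mem_Iio, Equiv.coe_toEmbedding]
    constructor
    · intro h; exact ⟨π k, h, by simp⟩
    · rintro ⟨v, hv, rfl⟩; simpa using hv
  rw [this, Finset.card_map, Fin.card_Iio]

lemma eq_of_dsc_empty {n : ℕ} {π φ : Equiv.Perm (Fin n)} (h : dsc n π φ = ∅) : π = φ := by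
  have key : ∀ i k : Fin n, π k < π i ↔ φ k < φ i := by
    intro i k
    rcases lt_trichotomy k i with hk | rfl | hk
    · have := Finset.eq_empty_iff_forall_notMem.mp h (k, i)
      rw [mem_dsc_iff] at this
      simp only [not_and, not_not] at this
      exact (this hk)
    · simp
    · have := Finset.eq_empty_iff_forall_notMem.mp h (i, k)
      rw [mem_dsc_iff] at this
      simp only [not_and, not_not] at this
      have h2 := this hk
      have hπ : π i ≠ π k := fun hh => absurd (π.injective hh) (ne_of_lt hk)
      have hφ : φ i ≠ φ k := fun hh => absurd (φ.injective hh) (ne_of_lt hk)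
      rw [Fin.lt_def, Fin.lt_def] at h2 ⊢
      have := Fin.val_ne_of_ne hπ
      have := Fin.val_ne_of_ne hφ
      omega
  ext i
  have h1 := perm_val_eq_card π i
  have h2 := perm_val_eq_card φ i
  rw [show (Finset.univ.filter (fun k => π k < π i)) = (Finset.univ.filter (fun k => φ k < φ i)) by
    ext k; simp [key i k]] at h1
  show (π i : ℕ) = (φ i : ℕ)
  omega

lemma card_dsc_le_walk_length {n : ℕ} {π φ : Equiv.Perm (Fin n)} (w : (Gn n).Walk π φ) :
    (dsc n π φ).card ≤ w.length := by
  induction w with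
  | nil => simp [dsc_self]
  | @cons u v x hadj w ih =>
    have hsub : dsc n u x ⊆ dsc n u v ∪ dsc n v x := by
      intro p hp
      rw [dsc_symmDiff n u v x] at hp
      rw [Finset.mem_symmDiff] at hp
      rw [Finset.mem_union]
      tauto
    calc (dsc n u x).card ≤ (dsc n u v ∪ dsc n v x).card := Finset.card_le_card hsub
      _ ≤ (dsc n u v).card + (dsc n v x).card := Finset.card_union_le _ _
      _ = 1 + (dsc n v x).card := by rw [hadj]
      _ ≤ 1 + w.length := by omega
      _ = (SimpleGraph.Walk.cons hadj w).length := by simp [SimpleGraph.Walk.length_cons, Nat.add_comm]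

lemma pair_mem_dsc {n : ℕ} {π φ : Equiv.Perm (Fin n)} {k l : Fin n}
    (hkl : k ≠ l) (hπkl : π k < π l) (hφlk : φ l < φ k) :
    (if k < l then (k, l) else (l, k)) ∈ dsc n π φ := by
  have hπ' : ¬ π l < π k := not_lt.mpr (le_of_lt hπkl)
  have hφ' : ¬ φ k < φ l := not_lt.mpr (le_of_lt hφlk)
  split_ifs with h
  · rw [mem_dsc_iff]
    exact ⟨h, fun hiff => hφ' (hiff.mp hπkl)⟩
  · rw [mem_dsc_iff]
    exact ⟨lt_of_le_of_ne (not_lt.mp h) (fun hh => hkl hh.symm),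
      fun hiff => hπ' (hiff.mpr hφlk)⟩

lemma consecutive_of_min {n : ℕ} {π φ : Equiv.Perm (Fin n)} {p : Fin n × Fin n}
    (hp : p ∈ dsc n π φ)
    (hmin : ∀ q ∈ dsc n π φ,
      ((π p.2 : ℤ) - (π p.1 : ℤ)).natAbs ≤ ((π q.2 : ℤ) - (π q.1 : ℤ)).natAbs)
    {i j : Fin n} (hpij : p = (i, j) ∨ p = (j, i))
    (hπ : π i < π j) (hφ : φ j < φ i) :
    (π j : ℕ) = (π i : ℕ) + 1 := by
  have hπv : (π i : ℕ) < (π j : ℕ) := hπ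
  have hgap : ((π p.2 : ℤ) - (π p.1 : ℤ)).natAbs = (π j : ℕ) - (π i : ℕ) := by
    rcases hpij with rfl | rfl
    · show ((π j : ℤ) - (π i : ℤ)).natAbs = _
      omega
    · show ((π i : ℤ) - (π j : ℤ)).natAbs = _
      omega
  by_contra hne
  have hb : (π i : ℕ) + 1 < (π j : ℕ) := by omega
  have hlt : (π i : ℕ) + 1 < n := lt_of_lt_of_le hb (le_of_lt (π j).isLt)
  obtain ⟨r, hπr⟩ : ∃ r, π r = ⟨(π i : ℕ) + 1, hlt⟩ :=
    ⟨π.symm _, π.apply_symm_apply _⟩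
  have hπrv : (π r : ℕ) = (π i : ℕ) + 1 := by rw [hπr]
  have hri : r ≠ i := by intro h; rw [h] at hπrv; omega
  have hrj : r ≠ j := by intro h; rw [h] at hπrv; omega
  have hφri : φ r ≠ φ i := fun h => hri (φ.injective h)
  have hφrj : φ r ≠ φ j := fun h => hrj (φ.injective h)
  rcases lt_or_gt_of_ne hφri with h | h
  · -- pair {i, r} is discordant with gap 1
    have hir : π i < π r := by rw [Fin.lt_def]; omega
    have hq := pair_mem_dsc (fun hh => hri hh.symm) hir h
    have hle := hmin _ hq
    rw [hgap] at hle
    split_ifs at hle with hlt'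
    · have : ((π (i, r).2 : ℤ) - (π (i, r).1 : ℤ)).natAbs = 1 := by
        show ((π r : ℤ) - (π i : ℤ)).natAbs = 1
        omega
      rw [this] at hle; omega
    · have : ((π (r, i).2 : ℤ) - (π (r, i).1 : ℤ)).natAbs = 1 := by
        show ((π i : ℤ) - (π r : ℤ)).natAbs = 1
        omega
      rw [this] at hle; omega
  · rcases lt_or_gt_of_ne hφrj with h' | h'
    · exact absurd (lt_trans h h') (not_lt.mpr (le_of_lt hφ))
    · have hrjlt : π r < π j := by rw [Fin.lt_def]; omega
      have hq := pair_mem_dsc hrj hrjlt h'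
      have hle := hmin _ hq
      rw [hgap] at hle
      split_ifs at hle with hlt'
      · have : ((π (r, j).2 : ℤ) - (π (r, j).1 : ℤ)).natAbs = (π j : ℕ) - (π i : ℕ) - 1 := by
          show ((π j : ℤ) - (π r : ℤ)).natAbs = _
          omega
        rw [this] at hle; omega
      · have : ((π (j, r).2 : ℤ) - (π (j, r).1 : ℤ)).natAbs = (π j : ℕ) - (π i : ℕ) - 1 := by
          show ((π r : ℤ) - (π j : ℤ)).natAbs = _
          omega
        rw [this] at hle; omega

lemma exists_step {n : ℕ} {π φ : Equiv.Perm (Fin n)} (h : (dsc n π φ).Nonempty) :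
    ∃ π', (dsc n π π').card = 1 ∧ (dsc n π' φ).card + 1 = (dsc n π φ).card := by
  obtain ⟨p, hp, hmin⟩ := Finset.exists_min_image _
    (fun q => ((π q.2 : ℤ) - (π q.1 : ℤ)).natAbs) h
  obtain ⟨hp1, hp2⟩ := mem_dsc_iff.mp hp
  have hπne : π p.1 ≠ π p.2 := fun hh => (ne_of_lt hp1) (π.injective hh)
  have hφne : φ p.1 ≠ φ p.2 := fun hh => (ne_of_lt hp1) (φ.injective hh)
  obtain ⟨i, j, hpij, hπij, hφji⟩ :
      ∃ i j, (p = (i, j) ∨ p = (j, i)) ∧ π i < π j ∧ φ j < φ i := by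
    rcases lt_or_gt_of_ne hπne with h' | h'
    · rcases lt_or_gt_of_ne hφne with h'' | h''
      · exact absurd ⟨fun _ => h'', fun _ => h'⟩ hp2
      · exact ⟨p.1, p.2, Or.inl rfl, h', h''⟩
    · rcases lt_or_gt_of_ne hφne with h'' | h''
      · exact ⟨p.2, p.1, Or.inr rfl, h', h''⟩
      · exact absurd ⟨fun hh => absurd hh (not_lt.mpr (le_of_lt h')),
          fun hh => absurd hh (not_lt.mpr (le_of_lt h''))⟩ hp2
  have hcons : (π j : ℕ) = (π i : ℕ) + 1 := consecutive_of_min hp hmin hpij hπij hφji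
  have hπv : (π i : ℕ) < (π j : ℕ) := hπij
  set π' : Equiv.Perm (Fin n) := Equiv.swap (π i) (π j) * π with hπ'
  have hinjv : ∀ k l : Fin n, (π k : ℕ) = (π l : ℕ) → k = l :=
    fun k l hh => π.injective (Fin.val_injective hh)
  have hval : ∀ k, ((π' k) : ℕ) =
      if (π k : ℕ) = (π i : ℕ) then (π j : ℕ)
      else if (π k : ℕ) = (π j : ℕ) then (π i : ℕ) else (π k : ℕ) := by
    intro k
    rw [hπ', Equiv.Perm.mul_apply, Equiv.swap_apply_def]
    by_cases h1 : π k = π i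
    · rw [if_pos h1, if_pos (congrArg Fin.val h1)]
    · rw [if_neg h1, if_neg (fun hv => h1 (Fin.val_injective hv))]
      by_cases h2 : π k = π j
      · rw [if_pos h2, if_pos (congrArg Fin.val h2)]
      · rw [if_neg h2, if_neg (fun hv => h2 (Fin.val_injective hv))]
  have keyv : ∀ k l : Fin n,
      (¬((π k : ℕ) < (π l : ℕ) ↔ (π' k : ℕ) < (π' l : ℕ))) ↔
        (((π k : ℕ) = (π i : ℕ) ∧ (π l : ℕ) = (π j : ℕ)) ∨
          ((π k : ℕ) = (π j : ℕ) ∧ (π l : ℕ) = (π i : ℕ))) := by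
    intro k l
    rw [hval k, hval l]
    split_ifs <;> omega
  have key : ∀ k l : Fin n, (¬(π k < π l ↔ π' k < π' l)) ↔
      ((k = i ∧ l = j) ∨ (k = j ∧ l = i)) := by
    intro k l
    simp only [Fin.lt_def]
    rw [keyv k l]
    constructor
    · rintro (⟨a1, a2⟩ | ⟨a1, a2⟩)
      · exact Or.inl ⟨hinjv _ _ a1, hinjv _ _ a2⟩
      · exact Or.inr ⟨hinjv _ _ a1, hinjv _ _ a2⟩
    · rintro (⟨rfl, rfl⟩ | ⟨rfl, rfl⟩)
      · exact Or.inl ⟨rfl, rfl⟩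
      · exact Or.inr ⟨rfl, rfl⟩
  have hsingle : dsc n π π' = {p} := by
    ext q
    rw [mem_dsc_iff, Finset.mem_singleton, key q.1 q.2]
    rcases hpij with rfl | rfl
    · constructor
      · rintro ⟨hq, ⟨h1, h2⟩ | ⟨h1, h2⟩⟩
        · exact Prod.ext_iff.mpr ⟨h1, h2⟩
        · exfalso; rw [h1, h2] at hq; exact lt_asymm hp1 hq
      · rintro rfl; exact ⟨hp1, Or.inl ⟨rfl, rfl⟩⟩
    · constructor
      · rintro ⟨hq, ⟨h1, h2⟩ | ⟨h1, h2⟩⟩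
        · exfalso; rw [h1, h2] at hq; exact lt_asymm hp1 hq
        · exact Prod.ext_iff.mpr ⟨h1, h2⟩
      · rintro rfl; exact ⟨hp1, Or.inr ⟨rfl, rfl⟩⟩
  refine ⟨π', by rw [hsingle]; exact Finset.card_singleton p, ?_⟩
  have hcomm : dsc n π' π = dsc n π π' := by
    ext q; simp only [dsc, Finset.mem_filter]; rw [mul_comm]
  have herase : dsc n π' φ = (dsc n π φ).erase p := by
    rw [dsc_symmDiff n π' π φ, hcomm, hsingle]
    ext q
    simp only [Finset.mem_symmDiff, Finset.mem_singleton, Finset.mem_erase]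
    constructor
    · rintro (⟨rfl, hq⟩ | ⟨hq1, hq2⟩)
      · exact absurd hp hq
      · exact ⟨hq2, hq1⟩
    · rintro ⟨hq1, hq2⟩
      exact Or.inr ⟨hq2, hq1⟩
  rw [herase, Finset.card_erase_of_mem hp]
  have : 0 < (dsc n π φ).card := Finset.card_pos.mpr ⟨p, hp⟩
  omega

lemma exists_walk_card {n : ℕ} :
    ∀ (m : ℕ) (π φ : Equiv.Perm (Fin n)), (dsc n π φ).card = m →
      ∃ w : (Gn n).Walk π φ, w.length = m := by
  intro m
  induction m with
  | zero =>
    intro π φ hm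
    have := eq_of_dsc_empty (Finset.card_eq_zero.mp hm)
    subst this
    exact ⟨SimpleGraph.Walk.nil, rfl⟩
  | succ m ih =>
    intro π φ hm
    have hne : (dsc n π φ).Nonempty := Finset.card_pos.mp (by omega)
    obtain ⟨π', hadj, hcard⟩ := exists_step hne
    obtain ⟨w, hw⟩ := ih π' φ (by omega)
    exact ⟨SimpleGraph.Walk.cons (show (Gn n).Adj π π' from hadj) w, by simp [SimpleGraph.Walk.length_cons, hw]⟩

lemma dist_eq_card_dsc {n : ℕ} (π φ : Equiv.Perm (Fin n)) :
    (Gn n).dist π φ = (dsc n π φ).card := by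
  obtain ⟨w, hw⟩ := exists_walk_card (dsc n π φ).card π φ rfl
  refine le_antisymm (hw ▸ SimpleGraph.dist_le w) ?_
  obtain ⟨w', hw'⟩ := SimpleGraph.Reachable.exists_walk_length_eq_dist ⟨w⟩
  exact hw' ▸ card_dsc_le_walk_length w'

lemma sum_symmDiff_add {α M : Type*} [DecidableEq α] [AddCommMonoid M]
    (B C : Finset α) (f : α → M) :
    ∑ x ∈ symmDiff B C, f x + ∑ x ∈ B ∩ C, f x + ∑ x ∈ B ∩ C, f x =
      ∑ x ∈ B, f x + ∑ x ∈ C, f x := by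
  rw [show symmDiff B C = (B ∪ C) \ (B ∩ C) from symmDiff_eq_sup_sdiff_inf B C,
    Finset.sum_sdiff (Finset.inter_subset_union), Finset.sum_union_inter]

/-- Let `n ≥ 3` and let `W` be a weight with `w_{i,j} > 0` for all `i < j`.
For any three pairwise distinct permutations `π, ψ, φ ∈ S_n`, the point `ψ`
lies between `π` and `φ` with respect to the graph metric `d_{G_n}` iff it
lies between them with respect to `d_W`. -/
theorem between_Gn_iff_between_dW (n : ℕ) (hn : 3 ≤ n)
    (W : Fin n → Fin n → ℝ) (hW : IsWeight n W)
    (hpos : ∀ i j : Fin n, i < j → 0 < W i j)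
    (π ψ φ : Equiv.Perm (Fin n))
    (h1 : π ≠ ψ) (h2 : ψ ≠ φ) (h3 : π ≠ φ) :
    (Gn n).dist π φ = (Gn n).dist π ψ + (Gn n).dist ψ φ ↔
      dW n W π φ = dW n W π ψ + dW n W ψ φ := by
  
  obtain ⟨hW1, hW2, hW3⟩ := hW
  have hT : (0 : ℝ) < ∑ p ∈ pairs n, W p.1 p.2 := hW3
  have hT0 : (∑ p ∈ pairs n, W p.1 p.2) ≠ 0 := ne_of_gt hT
  set B := dsc n π ψ with hB
  set C := dsc n ψ φ with hC
  have hA : dsc n π φ = symmDiff B C := dsc_symmDiff n π ψ φ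
  have hcard := sum_symmDiff_add B C (fun _ => (1 : ℕ))
  simp only [Finset.sum_const, smul_eq_mul, mul_one] at hcard
  have hgraph : ((Gn n).dist π φ = (Gn n).dist π ψ + (Gn n).dist ψ φ) ↔ B ∩ C = ∅ := by
    rw [dist_eq_card_dsc, dist_eq_card_dsc, dist_eq_card_dsc, hA, ← hB, ← hC]
    constructor
    · intro h
      have : (B ∩ C).card = 0 := by omega
      exact Finset.card_eq_zero.mp this
    · intro h
      rw [h] at hcard
      simp only [Finset.card_empty] at hcard
      omega
  have hsum := sum_symmDiff_add B C (fun p => W p.1 p.2)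
  have hI0 : (∑ p ∈ B ∩ C, W p.1 p.2) = 0 ↔ B ∩ C = ∅ := by
    constructor
    · intro h
      by_contra hne
      obtain ⟨p, hp⟩ := Finset.nonempty_iff_ne_empty.mpr hne
      have hplt : p.1 < p.2 := (mem_dsc_iff.mp (Finset.mem_inter.mp hp).1).1
      have := Finset.sum_eq_zero_iff_of_nonneg
        (fun q _ => hW2 q.1 q.2) |>.mp h p hp
      exact absurd this (ne_of_gt (hpos p.1 p.2 hplt))
    · intro h; rw [h]; simp
  have hdiveq : ∀ x y : ℝ, x / (∑ p ∈ pairs n, W p.1 p.2) = y / (∑ p ∈ pairs n, W p.1 p.2) ↔ x = y :=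
    fun x y => ⟨fun h => by field_simp at h; exact h, fun h => by rw [h]⟩
  have hnn : 0 ≤ ∑ p ∈ B ∩ C, W p.1 p.2 := Finset.sum_nonneg (fun q _ => hW2 _ _)
  have hweight : (dW n W π φ = dW n W π ψ + dW n W ψ φ) ↔ B ∩ C = ∅ := by
    simp only [dW]
    rw [hA, ← add_div, hdiveq]
    constructor
    · intro h
      apply hI0.mp
      linarith
    · intro h
      have h0 : (∑ p ∈ B ∩ C, W p.1 p.2) = 0 := hI0.mpr h
      linarith
  exact hgraph.trans hweight.symm
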